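/- Let m_el, m_n > 0, M := m_el + m_n, Λ > 0, and let 0 < p_c < M. Then for every P ∈ ℝ³ with |P| ≤ p_c and every σ with 0 ≤ σ ≤ Λ/2, one has min(γ¹_{≥σ}(P), γ²_{≥σ}(P), γ³_{≥σ}(P)) − γ⁰_{≥σ}(P) ≥ (1/(8 m_el m_n π²)) ∫_{ℝ³} 1_{Λ/2 ≤ |k| ≤ Λ}(k) · |k| / ((1 + p_c/M)|k| + |k|²/(2M)) dk, and this lower bound is a strictly positive real number. -/

import Mathlib

noncomputable section

open MeasureTheory

/-- ℝ³ with the Euclidean norm. -/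
abbrev R3 := EuclideanSpace ℝ (Fin 3)

/-- `γ⁰_{≥σ}(P) = −(1/(8 m_el m_n π²)) ∫ |k| 1_{σ≤|k|≤Λ}(k) / (|k| − (k·P)/M + |k|²/(2M)) dk`,
with `M = m_el + m_n`. -/
def gamma0 (mel mn Λ σ : ℝ) (P : R3) : ℝ :=
  -(1 / (8 * mel * mn * Real.pi ^ 2)) *
    ∫ k : R3,
      ‖k‖ * (if σ ≤ ‖k‖ ∧ ‖k‖ ≤ Λ then (1 : ℝ) else 0) /
        (‖k‖ - (inner ℝ k P : ℝ) / (mel + mn) + ‖k‖ ^ 2 / (2 * (mel + mn)))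

/-- `γ^j_{≥σ}(P) = (1/(8 m_el m_n π²)) ∫ |k| 1_{σ≤|k|≤Λ}(k) (k_j²/|k|²) / (|k| − (k·P)/M + |k|²/(2M)) dk`,
with `M = m_el + m_n`, for `j = 1,2,3`. -/
def gammaJ (mel mn Λ σ : ℝ) (P : R3) (j : Fin 3) : ℝ :=
  (1 / (8 * mel * mn * Real.pi ^ 2)) *
    ∫ k : R3,
      ‖k‖ * (if σ ≤ ‖k‖ ∧ ‖k‖ ≤ Λ then (1 : ℝ) else 0) * ((k j) ^ 2 / ‖k‖ ^ 2) /
        (‖k‖ - (inner ℝ k P : ℝ) / (mel + mn) + ‖k‖ ^ 2 / (2 * (mel + mn)))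

lemma integrable_of_bdd_supp (f : R3 → ℝ) (C Λ : ℝ)
    (hmeas : AEStronglyMeasurable f volume) (h0 : ∀ k, 0 ≤ f k)
    (hb : ∀ k, ‖k‖ ≤ Λ → f k ≤ C) (hout : ∀ k : R3, Λ < ‖k‖ → f k = 0) :
    Integrable f := by
  have hCint : Integrable ((Metric.closedBall (0:R3) Λ).indicator fun _ => C) := by
    refine (integrable_indicator_iff measurableSet_closedBall).2 ?_
    exact integrableOn_const measure_closedBall_lt_top.ne
  refine hCint.mono' hmeas ?_
  filter_upwards with k
  rw [Real.norm_eq_abs, abs_of_nonneg (h0 k)]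
  by_cases hk : ‖k‖ ≤ Λ
  · rw [Set.indicator_of_mem (by simpa [Metric.mem_closedBall, dist_zero_right] using hk)]
    exact hb k hk
  · rw [hout k (not_le.1 hk), Set.indicator_of_notMem
      (by simpa [Metric.mem_closedBall, dist_zero_right] using hk)]

set_option maxHeartbeats 1000000 in
/-- The hyperfine gap `min(γ¹,γ²,γ³) − γ⁰` is bounded below by a strictly positive
constant, uniformly in `|P| ≤ p_c` and `0 ≤ σ ≤ Λ/2`. -/
theorem gamma_gap_positive (mel mn Λ pc : ℝ) (hmel : 0 < mel) (hmn : 0 < mn)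
    (hΛ : 0 < Λ) (hpc0 : 0 < pc) (hpc : pc < mel + mn) :
    ∀ P : R3, ‖P‖ ≤ pc → ∀ σ : ℝ, 0 ≤ σ → σ ≤ Λ / 2 →
      min (gammaJ mel mn Λ σ P 0) (min (gammaJ mel mn Λ σ P 1) (gammaJ mel mn Λ σ P 2)) -
          gamma0 mel mn Λ σ P
        ≥ (1 / (8 * mel * mn * Real.pi ^ 2)) *
            ∫ k : R3,
              (if Λ / 2 ≤ ‖k‖ ∧ ‖k‖ ≤ Λ then (1 : ℝ) else 0) * ‖k‖ /
                ((1 + pc / (mel + mn)) * ‖k‖ + ‖k‖ ^ 2 / (2 * (mel + mn))) ∧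
      0 < (1 / (8 * mel * mn * Real.pi ^ 2)) *
            ∫ k : R3,
              (if Λ / 2 ≤ ‖k‖ ∧ ‖k‖ ≤ Λ then (1 : ℝ) else 0) * ‖k‖ /
                ((1 + pc / (mel + mn)) * ‖k‖ + ‖k‖ ^ 2 / (2 * (mel + mn))) := by
  intro P hP σ hσ0 hσΛ
  have hM : 0 < mel + mn := by positivity
  have hpcM : pc / (mel + mn) < 1 := (div_lt_one hM).2 hpc
  have hpcM0 : 0 < pc / (mel + mn) := by positivity
  have hπ : Real.pi ≠ 0 := Real.pi_ne_zero
  have hc : 0 < 1 / (8 * mel * mn * Real.pi ^ 2) := by positivity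
  set f : R3 → ℝ := fun k =>
      ‖k‖ * (if σ ≤ ‖k‖ ∧ ‖k‖ ≤ Λ then (1 : ℝ) else 0) /
        (‖k‖ - (inner ℝ k P : ℝ) / (mel + mn) + ‖k‖ ^ 2 / (2 * (mel + mn))) with hfdef
  set g : R3 → ℝ := fun k =>
      (if Λ / 2 ≤ ‖k‖ ∧ ‖k‖ ≤ Λ then (1 : ℝ) else 0) * ‖k‖ /
        ((1 + pc / (mel + mn)) * ‖k‖ + ‖k‖ ^ 2 / (2 * (mel + mn))) with hgdef
  -- inner product bound
  have hinner : ∀ k : R3, -(pc * ‖k‖) ≤ (inner ℝ k P : ℝ) ∧ (inner ℝ k P : ℝ) ≤ pc * ‖k‖ := by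
    intro k
    have h1 : |(inner ℝ k P : ℝ)| ≤ ‖k‖ * ‖P‖ := abs_real_inner_le_norm k P
    have h2 : ‖k‖ * ‖P‖ ≤ ‖k‖ * pc := mul_le_mul_of_nonneg_left hP (norm_nonneg k)
    constructor <;> cases' abs_le.1 (h1.trans h2) with ha hb <;> nlinarith
  -- lower bound on the denominator of f
  have hDlb : ∀ k : R3, ‖k‖ * (1 - pc / (mel + mn)) ≤
      ‖k‖ - (inner ℝ k P : ℝ) / (mel + mn) + ‖k‖ ^ 2 / (2 * (mel + mn)) := by
    intro k
    have h1 : (inner ℝ k P : ℝ) / (mel + mn) ≤ pc * ‖k‖ / (mel + mn) :=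
      (div_le_div_iff_of_pos_right hM).2 (hinner k).2
    have h2 : 0 ≤ ‖k‖ ^ 2 / (2 * (mel + mn)) := by positivity
    have h3 : pc * ‖k‖ / (mel + mn) = ‖k‖ * (pc / (mel + mn)) := by ring
    nlinarith
  have hDnn : ∀ k : R3,
      0 ≤ ‖k‖ - (inner ℝ k P : ℝ) / (mel + mn) + ‖k‖ ^ 2 / (2 * (mel + mn)) := by
    intro k
    have := hDlb k
    nlinarith [norm_nonneg k]
  have hDpos : ∀ k : R3, k ≠ 0 →
      0 < ‖k‖ - (inner ℝ k P : ℝ) / (mel + mn) + ‖k‖ ^ 2 / (2 * (mel + mn)) := by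
    intro k hk
    have hn : 0 < ‖k‖ := norm_pos_iff.2 hk
    have := hDlb k
    nlinarith
  -- D ≤ Dbar
  have hDle : ∀ k : R3,
      ‖k‖ - (inner ℝ k P : ℝ) / (mel + mn) + ‖k‖ ^ 2 / (2 * (mel + mn)) ≤
      (1 + pc / (mel + mn)) * ‖k‖ + ‖k‖ ^ 2 / (2 * (mel + mn)) := by
    intro k
    have h1 : -(pc * ‖k‖) / (mel + mn) ≤ (inner ℝ k P : ℝ) / (mel + mn) :=
      (div_le_div_iff_of_pos_right hM).2 (hinner k).1
    have h2 : -(pc * ‖k‖) / (mel + mn) = -(‖k‖ * (pc / (mel + mn))) := by ring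
    nlinarith
  -- nonnegativity
  have hfnn : ∀ k, 0 ≤ f k := by
    intro k
    apply div_nonneg _ (hDnn k)
    positivity
  have hgnn : ∀ k, 0 ≤ g k := by
    intro k
    apply div_nonneg _ (by positivity)
    positivity
  -- pointwise g ≤ f
  have hgf : ∀ k, g k ≤ f k := by
    intro k
    by_cases hk : Λ / 2 ≤ ‖k‖ ∧ ‖k‖ ≤ Λ
    · have hk' : σ ≤ ‖k‖ ∧ ‖k‖ ≤ Λ := ⟨hσΛ.trans hk.1, hk.2⟩
      have hkn : 0 < ‖k‖ := lt_of_lt_of_le (by linarith) hk.1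
      have hk0 : k ≠ 0 := norm_pos_iff.1 hkn
      simp only [hfdef, hgdef, if_pos hk, if_pos hk', one_mul, mul_one]
      exact div_le_div_of_nonneg_left hkn.le (hDpos k hk0) (hDle k)
    · have hg0 : g k = 0 := by simp [hgdef, if_neg hk]
      rw [hg0]; exact hfnn k
  -- integrability of f
  have hfint : Integrable f := by
    refine integrable_of_bdd_supp f (1 - pc / (mel + mn))⁻¹ Λ ?_ hfnn ?_ ?_
    · apply Measurable.aestronglyMeasurable
      apply Measurable.div
      · apply Measurable.mul measurable_norm
        apply Measurable.ite ?_ measurable_const measurable_const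
        exact (measurableSet_le measurable_const measurable_norm).inter
          (measurableSet_le measurable_norm measurable_const)
      · apply Measurable.add
        · exact Measurable.sub measurable_norm
            (((continuous_id.inner continuous_const).measurable).div_const _)
        · exact (measurable_norm.pow_const 2).div_const _
    · intro k hkΛ
      by_cases hk0 : k = 0
      · have hf0 : f k = 0 := by rw [hfdef, hk0]; simp
        rw [hf0]
        exact inv_nonneg.2 (by linarith)
      · have hkn : 0 < ‖k‖ := norm_pos_iff.2 hk0
        have hnum : ‖k‖ * (if σ ≤ ‖k‖ ∧ ‖k‖ ≤ Λ then (1:ℝ) else 0) ≤ ‖k‖ := by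
          split <;> simp [hkn.le]
        have hstep : f k ≤ ‖k‖ / (‖k‖ * (1 - pc / (mel + mn))) :=
          div_le_div₀ (norm_nonneg k) hnum (by nlinarith) (hDlb k)
        have heq : ‖k‖ / (‖k‖ * (1 - pc / (mel + mn))) = (1 - pc / (mel + mn))⁻¹ := by
          rw [div_mul_eq_div_div, div_self hkn.ne', one_div]
        rw [heq] at hstep
        exact hstep
    · intro k hkΛ
      have hcond : ¬ (σ ≤ ‖k‖ ∧ ‖k‖ ≤ Λ) := fun h => absurd h.2 (not_le.2 hkΛ)
      rw [hfdef]
      simp only [if_neg hcond, mul_zero, zero_div]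
  -- integrability of g
  have hgint : Integrable g := by
    refine integrable_of_bdd_supp g (1 + pc / (mel + mn))⁻¹ Λ ?_ hgnn ?_ ?_
    · apply Measurable.aestronglyMeasurable
      apply Measurable.div
      · apply Measurable.mul _ measurable_norm
        apply Measurable.ite ?_ measurable_const measurable_const
        exact (measurableSet_le measurable_const measurable_norm).inter
          (measurableSet_le measurable_norm measurable_const)
      · exact (measurable_const.mul measurable_norm).add
          ((measurable_norm.pow_const 2).div_const _)
    · intro k hkΛ
      by_cases hk0 : k = 0
      · have hg0 : g k = 0 := by rw [hgdef, hk0]; simp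
        rw [hg0]
        positivity
      · have hkn : 0 < ‖k‖ := norm_pos_iff.2 hk0
        have hnum : (if Λ / 2 ≤ ‖k‖ ∧ ‖k‖ ≤ Λ then (1:ℝ) else 0) * ‖k‖ ≤ ‖k‖ := by
          split <;> simp [hkn.le]
        have hden : (1 + pc / (mel + mn)) * ‖k‖ ≤
            (1 + pc / (mel + mn)) * ‖k‖ + ‖k‖ ^ 2 / (2 * (mel + mn)) := by
          have h2 : 0 ≤ ‖k‖ ^ 2 / (2 * (mel + mn)) := by positivity
          linarith
        have hstep : g k ≤ ‖k‖ / ((1 + pc / (mel + mn)) * ‖k‖) :=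
          div_le_div₀ (norm_nonneg k) hnum (by nlinarith) hden
        have heq : ‖k‖ / ((1 + pc / (mel + mn)) * ‖k‖) = (1 + pc / (mel + mn))⁻¹ := by
          rw [mul_comm, div_mul_eq_div_div, div_self hkn.ne', one_div]
        rw [heq] at hstep
        exact hstep
    · intro k hkΛ
      have hcond : ¬ (Λ / 2 ≤ ‖k‖ ∧ ‖k‖ ≤ Λ) := fun h => absurd h.2 (not_le.2 hkΛ)
      rw [hgdef]
      simp only [if_neg hcond, zero_mul, zero_div]
  -- positivity of ∫ g
  have hGpos : 0 < ∫ k : R3, g k := by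
    rw [integral_pos_iff_support_of_nonneg hgnn hgint]
    have hsub : {k : R3 | Λ / 2 < ‖k‖ ∧ ‖k‖ < Λ} ⊆ Function.support g := by
      intro k hk
      have hkn : 0 < ‖k‖ := lt_trans (by linarith) hk.1
      have hcond : Λ / 2 ≤ ‖k‖ ∧ ‖k‖ ≤ Λ := ⟨hk.1.le, hk.2.le⟩
      have : 0 < g k := by
        rw [hgdef]
        simp only [if_pos hcond, one_mul]
        apply div_pos hkn
        have h1 : 0 < (1 + pc / (mel + mn)) * ‖k‖ := by nlinarith
        have h2 : 0 ≤ ‖k‖ ^ 2 / (2 * (mel + mn)) := by positivity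
        linarith
      exact this.ne'
    have hopen : IsOpen {k : R3 | Λ / 2 < ‖k‖ ∧ ‖k‖ < Λ} :=
      (isOpen_lt continuous_const continuous_norm).inter
        (isOpen_lt continuous_norm continuous_const)
    have hne : Set.Nonempty {k : R3 | Λ / 2 < ‖k‖ ∧ ‖k‖ < Λ} := by
      have hmem : Λ / 2 < ‖(EuclideanSpace.single (0 : Fin 3) (3 * Λ / 4) : R3)‖ ∧
          ‖(EuclideanSpace.single (0 : Fin 3) (3 * Λ / 4) : R3)‖ < Λ := by
        rw [EuclideanSpace.norm_single, Real.norm_eq_abs, abs_of_nonneg (by linarith)]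
        constructor <;> linarith
      exact ⟨_, hmem⟩
    exact lt_of_lt_of_le (hopen.measure_pos volume hne) (measure_mono hsub)
  -- comparison of integrals
  have hint : ∫ k : R3, g k ≤ ∫ k : R3, f k := integral_mono hgint hfint hgf
  have hfin : (1 / (8 * mel * mn * Real.pi ^ 2)) * ∫ k : R3, g k ≤
      (1 / (8 * mel * mn * Real.pi ^ 2)) * ∫ k : R3, f k :=
    mul_le_mul_of_nonneg_left hint hc.le
  -- nonnegativity of the gammaJ's
  have hj : ∀ j : Fin 3, 0 ≤ gammaJ mel mn Λ σ P j := by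
    intro j
    unfold gammaJ
    apply mul_nonneg hc.le
    apply integral_nonneg
    intro k
    apply div_nonneg _ (hDnn k)
    have : 0 ≤ (if σ ≤ ‖k‖ ∧ ‖k‖ ≤ Λ then (1:ℝ) else 0) := by split <;> norm_num
    positivity
  have hmin : 0 ≤ min (gammaJ mel mn Λ σ P 0)
      (min (gammaJ mel mn Λ σ P 1) (gammaJ mel mn Λ σ P 2)) :=
    le_min (hj 0) (le_min (hj 1) (hj 2))
  have hgam0 : gamma0 mel mn Λ σ P =
      -((1 / (8 * mel * mn * Real.pi ^ 2)) * ∫ k : R3, f k) := by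
    unfold gamma0
    rw [neg_mul]
  constructor
  · rw [ge_iff_le, hgam0]
    linarith
  · exact mul_pos hc hGpos
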